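/- Let f : A → A' and g : B → B' be surjective group homomorphisms. Then the induced homomorphism f ∗ g : A ∗ B → A' ∗ B' on free products maps the cosmash product A ⋄ B onto A' ⋄ B'. Likewise, for a further surjective group homomorphism l : C → C', the induced homomorphism f ∗ g ∗ l : A ∗ B ∗ C → A' ∗ B' ∗ C' maps the ternary cosmash product A ⋄ B ⋄ C onto A' ⋄ B' ⋄ C'. -/

import Mathlib

open Monoid Function
open scoped Monoid.Coprod

/-- The comparison homomorphism `Σ_{A,B} : A ∗ B →* A × B`. -/
def cosmashCompare (A B : Type*) [Group A] [Group B] : (A ∗ B) →* A × B :=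
  Monoid.Coprod.lift (MonoidHom.inl A B) (MonoidHom.inr A B)

/-- The (binary) cosmash product `A ⋄ B = ker Σ_{A,B}`. -/
def cosmash (A B : Type*) [Group A] [Group B] : Subgroup (A ∗ B) :=
  (cosmashCompare A B).ker

/-- The ternary comparison homomorphism
`Σ_{A,B,C} : A ∗ B ∗ C →* (A ∗ B) × (A ∗ C) × (B ∗ C)`. -/
def cosmashCompare₃ (A B C : Type*) [Group A] [Group B] [Group C] :
    (A ∗ (B ∗ C)) →* (A ∗ B) × (A ∗ C) × (B ∗ C) :=
  Monoid.Coprod.lift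
    ((Monoid.Coprod.inl : A →* A ∗ B).prod
      (((Monoid.Coprod.inl : A →* A ∗ C)).prod (1 : A →* B ∗ C)))
    (Monoid.Coprod.lift
      ((Monoid.Coprod.inr : B →* A ∗ B).prod
        ((1 : B →* A ∗ C).prod (Monoid.Coprod.inl : B →* B ∗ C)))
      ((1 : C →* A ∗ B).prod
        ((Monoid.Coprod.inr : C →* A ∗ C).prod (Monoid.Coprod.inr : C →* B ∗ C))))

/-- The ternary cosmash product `A ⋄ B ⋄ C = ker Σ_{A,B,C}`. -/
def cosmash₃ (A B C : Type*) [Group A] [Group B] [Group C] :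
    Subgroup (A ∗ (B ∗ C)) :=
  (cosmashCompare₃ A B C).ker

namespace CosmashAux
open Monoid.Coprod

/-- `Coprod.map` of surjective homomorphisms is surjective. -/
lemma coprod_map_surjective {A A' B B' : Type*} [Group A] [Group A'] [Group B] [Group B']
    {f : A →* A'} {g : B →* B'} (hf : Surjective f) (hg : Surjective g) :
    Surjective (Monoid.Coprod.map f g) := by
  intro y
  induction y using Monoid.Coprod.induction_on with
  | inl a' => obtain ⟨a, rfl⟩ := hf a'; exact ⟨inl a, by simp⟩
  | inr b' => obtain ⟨b, rfl⟩ := hg b'; exact ⟨inr b, by simp⟩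
  | mul x y hx hy =>
    obtain ⟨u, rfl⟩ := hx; obtain ⟨v, rfl⟩ := hy
    exact ⟨u * v, by simp⟩

section Defs

variable (A B C : Type*) [Group A] [Group B] [Group C]

/-- Kill `C`. -/
def π₁ : (A ∗ (B ∗ C)) →* A ∗ B := lift inl (lift inr 1)
/-- Kill `B`. -/
def π₂ : (A ∗ (B ∗ C)) →* A ∗ C := lift inl (lift 1 inr)
/-- Kill `A`. -/
def π₃ : (A ∗ (B ∗ C)) →* B ∗ C := lift 1 (MonoidHom.id _)

def j₁ : (A ∗ B) →* A ∗ (B ∗ C) := lift inl (inr.comp inl)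
def j₂ : (A ∗ C) →* A ∗ (B ∗ C) := lift inl (inr.comp inr)

def al : (A ∗ B) →* A ∗ C := lift inl 1
def be : (A ∗ B) →* B ∗ C := lift 1 inl
def ka : (A ∗ C) →* B ∗ C := lift 1 inr

lemma compare₃_eq :
    cosmashCompare₃ A B C = (π₁ A B C).prod ((π₂ A B C).prod (π₃ A B C)) := by
  ext x <;>
    simp [cosmashCompare₃, π₁, π₂, π₃, MonoidHom.prod_apply]

lemma mem_cosmash₃ {x : A ∗ (B ∗ C)} :
    x ∈ cosmash₃ A B C ↔ π₁ A B C x = 1 ∧ π₂ A B C x = 1 ∧ π₃ A B C x = 1 := by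
  rw [cosmash₃, MonoidHom.mem_ker, compare₃_eq]
  simp [Prod.ext_iff]

lemma compare_eq :
    cosmashCompare A B = (fst : A ∗ B →* A).prod snd := by
  ext x <;> simp [cosmashCompare]

lemma mem_cosmash {x : A ∗ B} :
    x ∈ cosmash A B ↔ fst x = 1 ∧ snd x = 1 := by
  rw [cosmash, MonoidHom.mem_ker, compare_eq]
  simp [Prod.ext_iff]

end Defs

end CosmashAux

set_option maxHeartbeats 2000000 in
/-- Induced homomorphisms of free products along surjections map (binary and ternary)
cosmash products onto cosmash products. -/
theorem cosmash_map_surjective {A A' B B' C C' : Type*}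
    [Group A] [Group A'] [Group B] [Group B'] [Group C] [Group C']
    (f : A →* A') (g : B →* B') (l : C →* C')
    (hf : Surjective f) (hg : Surjective g) (hl : Surjective l) :
    Subgroup.map (Monoid.Coprod.map f g) (cosmash A B) = cosmash A' B' ∧
    Subgroup.map (Monoid.Coprod.map f (Monoid.Coprod.map g l)) (cosmash₃ A B C) = cosmash₃ A' B' C' := by
  open Monoid.Coprod CosmashAux in
  constructor
  · -- binary case
    have natf : (fst : A' ∗ B' →* A').comp (Monoid.Coprod.map f g) = f.comp fst := by
      ext x <;> simp
    have natg : (snd : A' ∗ B' →* B').comp (Monoid.Coprod.map f g) = g.comp snd := by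
      ext x <;> simp
    apply le_antisymm
    · rintro _ ⟨x, hx, rfl⟩
      simp only [SetLike.mem_coe, mem_cosmash] at hx ⊢
      have e1 := DFunLike.congr_fun natf x
      have e2 := DFunLike.congr_fun natg x
      simp only [MonoidHom.comp_apply] at e1 e2
      exact ⟨by rw [e1, hx.1, map_one], by rw [e2, hx.2, map_one]⟩
    · intro x' hx'
      rw [mem_cosmash] at hx'
      obtain ⟨x, rfl⟩ := coprod_map_surjective hf hg x'
      set φ := Monoid.Coprod.map f g
      have e1 := DFunLike.congr_fun natf x
      have e2 := DFunLike.congr_fun natg x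
      simp only [MonoidHom.comp_apply] at e1 e2
      have h1 : f (Monoid.Coprod.fst x) = 1 := by rw [← e1]; exact hx'.1
      have h2 : g (Monoid.Coprod.snd x) = 1 := by rw [← e2]; exact hx'.2
      set n : A ∗ B := inl (fst x) * inr (snd x) with hn
      refine ⟨x * n⁻¹, ?_, ?_⟩
      · simp only [SetLike.mem_coe, mem_cosmash]
        constructor <;> simp [hn]
      · have : φ n = 1 := by simp [hn, φ, h1, h2]
        simp [this]
  · -- ternary case
    set φ := Monoid.Coprod.map f (Monoid.Coprod.map g l) with hφ
    -- naturality for the three projections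
    have N1 : (π₁ A' B' C').comp φ = (Monoid.Coprod.map f g).comp (π₁ A B C) := by
      ext x <;> simp [π₁, φ]
    have N2 : (π₂ A' B' C').comp φ = (Monoid.Coprod.map f l).comp (π₂ A B C) := by
      ext x <;> simp [π₂, φ]
    have N3 : (π₃ A' B' C').comp φ = (Monoid.Coprod.map g l).comp (π₃ A B C) := by
      ext x <;> simp [π₃, φ]
    apply le_antisymm
    · rintro _ ⟨x, hx, rfl⟩
      simp only [SetLike.mem_coe, mem_cosmash₃] at hx ⊢
      have e1 := DFunLike.congr_fun N1 x
      have e2 := DFunLike.congr_fun N2 x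
      have e3 := DFunLike.congr_fun N3 x
      simp only [MonoidHom.comp_apply] at e1 e2 e3
      exact ⟨by rw [e1, hx.1, map_one], by rw [e2, hx.2.1, map_one],
        by rw [e3, hx.2.2, map_one]⟩
    · intro x' hx'
      rw [mem_cosmash₃] at hx'
      obtain ⟨x, rfl⟩ := coprod_map_surjective hf (coprod_map_surjective hg hl) x'
      -- abbreviations
      set u := π₁ A B C x with hu
      set v := π₂ A B C x with hv
      set w := π₃ A B C x with hw
      have eN1 := DFunLike.congr_fun N1 x
      have eN2 := DFunLike.congr_fun N2 x
      have eN3 := DFunLike.congr_fun N3 x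
      simp only [MonoidHom.comp_apply] at eN1 eN2 eN3
      have hu' : Monoid.Coprod.map f g u = 1 := by rw [hu, ← eN1]; exact hx'.1
      have hv' : Monoid.Coprod.map f l v = 1 := by rw [hv, ← eN2]; exact hx'.2.1
      have hw' : Monoid.Coprod.map g l w = 1 := by rw [hw, ← eN3]; exact hx'.2.2
      -- the correction element
      set n : A ∗ (B ∗ C) :=
        inr (w * (be A B C u)⁻¹ * (ka A B C v)⁻¹) * j₂ A B C (v * (al A B C u)⁻¹)
          * j₁ A B C u with hn
      -- π₁ n = u
      have A1 : (π₁ A B C).comp (inr : (B ∗ C) →* A ∗ (B ∗ C)) = lift inr 1 := by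
        ext x <;> simp [π₁]
      have A2 : (lift inr 1 : (B ∗ C) →* A ∗ B).comp (π₃ A B C)
          = ((lift inr 1 : (B ∗ C) →* A ∗ B).comp (be A B C)).comp (π₁ A B C) := by
        ext x <;> simp [π₁, π₃, be]
      have A3 : (lift inr 1 : (B ∗ C) →* A ∗ B).comp (ka A B C) = 1 := by
        ext x <;> simp [ka]
      have A4 : (π₁ A B C).comp (j₂ A B C) = lift inl 1 := by
        ext x <;> simp [π₁, j₂]
      have A5 : (lift inl 1 : (A ∗ C) →* A ∗ B).comp (π₂ A B C)
          = ((lift inl 1 : (A ∗ C) →* A ∗ B).comp (al A B C)).comp (π₁ A B C) := by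
        ext x <;> simp [π₁, π₂, al]
      have A6 : (π₁ A B C).comp (j₁ A B C) = MonoidHom.id _ := by
        ext x <;> simp [π₁, j₁]
      have hπ₁n : π₁ A B C n = u := by
        have a1 : ∀ t, π₁ A B C (inr t) = (lift inr 1 : (B ∗ C) →* A ∗ B) t :=
          fun t => DFunLike.congr_fun A1 t
        have a4 : ∀ t, π₁ A B C (j₂ A B C t) = (lift inl 1 : (A ∗ C) →* A ∗ B) t :=
          fun t => DFunLike.congr_fun A4 t
        have a6 : ∀ t, π₁ A B C (j₁ A B C t) = t := fun t => DFunLike.congr_fun A6 t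
        have e1 : (lift inr 1 : (B ∗ C) →* A ∗ B) w
            = (lift inr 1 : (B ∗ C) →* A ∗ B) (be A B C u) := DFunLike.congr_fun A2 x
        have e2 : (lift inr 1 : (B ∗ C) →* A ∗ B) (ka A B C v) = 1 := DFunLike.congr_fun A3 v
        have e3 : (lift inl 1 : (A ∗ C) →* A ∗ B) v
            = (lift inl 1 : (A ∗ C) →* A ∗ B) (al A B C u) := DFunLike.congr_fun A5 x
        rw [hn, map_mul, map_mul, a1, a4, a6]
        simp only [map_mul, map_inv]
        rw [e1, e2, e3]
        group
      -- π₂ n = v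
      have B1 : (π₂ A B C).comp (inr : (B ∗ C) →* A ∗ (B ∗ C)) = lift 1 inr := by
        ext x <;> simp [π₂]
      have B2 : (lift 1 inr : (B ∗ C) →* A ∗ C).comp (be A B C) = 1 := by
        ext x <;> simp [be]
      have B3 : (lift 1 inr : (B ∗ C) →* A ∗ C).comp (π₃ A B C)
          = ((lift 1 inr : (B ∗ C) →* A ∗ C).comp (ka A B C)).comp (π₂ A B C) := by
        ext x <;> simp [π₂, π₃, ka]
      have B4 : (π₂ A B C).comp (j₂ A B C) = MonoidHom.id _ := by
        ext x <;> simp [π₂, j₂]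
      have B5 : (π₂ A B C).comp (j₁ A B C) = lift inl 1 := by
        ext x <;> simp [π₂, j₁]
      have B6 : (al A B C).comp (π₁ A B C)
          = (lift inl 1 : (A ∗ B) →* A ∗ C).comp (π₁ A B C) := by
        ext x <;> simp [π₁, al]
      have hπ₂n : π₂ A B C n = v := by
        have b1 : ∀ t, π₂ A B C (inr t) = (lift 1 inr : (B ∗ C) →* A ∗ C) t :=
          fun t => DFunLike.congr_fun B1 t
        have b4 : ∀ t, π₂ A B C (j₂ A B C t) = t := fun t => DFunLike.congr_fun B4 t
        have b5 : ∀ t, π₂ A B C (j₁ A B C t) = (lift inl 1 : (A ∗ B) →* A ∗ C) t :=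
          fun t => DFunLike.congr_fun B5 t
        have e1 : (lift 1 inr : (B ∗ C) →* A ∗ C) (be A B C u) = 1 := DFunLike.congr_fun B2 u
        have e2 : (lift 1 inr : (B ∗ C) →* A ∗ C) w
            = (lift 1 inr : (B ∗ C) →* A ∗ C) (ka A B C v) := DFunLike.congr_fun B3 x
        have e3 : al A B C u = (lift inl 1 : (A ∗ B) →* A ∗ C) u := DFunLike.congr_fun B6 x
        rw [hn, map_mul, map_mul, b1, b4, b5]
        simp only [map_mul, map_inv]
        rw [e1, e2, ← e3]
        group
      -- π₃ n = w
      have C1 : (π₃ A B C).comp (inr : (B ∗ C) →* A ∗ (B ∗ C)) = MonoidHom.id _ := by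
        ext x <;> simp [π₃]
      have C2 : (π₃ A B C).comp (j₂ A B C) = ka A B C := by
        ext x <;> simp [π₃, j₂, ka]
      have C3 : (ka A B C).comp (al A B C) = 1 := by
        ext x <;> simp [ka, al]
      have C4 : (π₃ A B C).comp (j₁ A B C) = be A B C := by
        ext x <;> simp [π₃, j₁, be]
      have hπ₃n : π₃ A B C n = w := by
        have c1 : ∀ t, π₃ A B C (inr t) = t := fun t => DFunLike.congr_fun C1 t
        have c2 : ∀ t, π₃ A B C (j₂ A B C t) = ka A B C t := fun t => DFunLike.congr_fun C2 t
        have c4 : ∀ t, π₃ A B C (j₁ A B C t) = be A B C t := fun t => DFunLike.congr_fun C4 t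
        have e1 : ka A B C (al A B C u) = 1 := DFunLike.congr_fun C3 u
        rw [hn, map_mul, map_mul, c1, c2, c4]
        simp only [map_mul, map_inv]
        rw [e1]
        group
      -- φ n = 1
      have M1 : φ.comp (j₁ A B C) = (j₁ A' B' C').comp (Monoid.Coprod.map f g) := by
        ext x <;> simp [φ, j₁]
      have M2 : φ.comp (j₂ A B C) = (j₂ A' B' C').comp (Monoid.Coprod.map f l) := by
        ext x <;> simp [φ, j₂]
      have M3 : φ.comp (inr : (B ∗ C) →* A ∗ (B ∗ C))
          = (inr : (B' ∗ C') →* A' ∗ (B' ∗ C')).comp (Monoid.Coprod.map g l) := by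
        ext x <;> simp [φ]
      have X1 : (Monoid.Coprod.map g l).comp (be A B C)
          = (be A' B' C').comp (Monoid.Coprod.map f g) := by
        ext x <;> simp [be]
      have X2 : (Monoid.Coprod.map g l).comp (ka A B C)
          = (ka A' B' C').comp (Monoid.Coprod.map f l) := by
        ext x <;> simp [ka]
      have X3 : (Monoid.Coprod.map f l).comp (al A B C)
          = (al A' B' C').comp (Monoid.Coprod.map f g) := by
        ext x <;> simp [al]
      have hφn : φ n = 1 := by
        have m1 : ∀ t, φ (j₁ A B C t) = j₁ A' B' C' (Monoid.Coprod.map f g t) :=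
          fun t => DFunLike.congr_fun M1 t
        have m2 : ∀ t, φ (j₂ A B C t) = j₂ A' B' C' (Monoid.Coprod.map f l t) :=
          fun t => DFunLike.congr_fun M2 t
        have m3 : ∀ t, φ (inr t : A ∗ (B ∗ C)) = inr (Monoid.Coprod.map g l t) :=
          fun t => DFunLike.congr_fun M3 t
        have x1 : ∀ t, Monoid.Coprod.map g l (be A B C t)
            = be A' B' C' (Monoid.Coprod.map f g t) := fun t => DFunLike.congr_fun X1 t
        have x2 : ∀ t, Monoid.Coprod.map g l (ka A B C t)
            = ka A' B' C' (Monoid.Coprod.map f l t) := fun t => DFunLike.congr_fun X2 t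
        have x3 : ∀ t, Monoid.Coprod.map f l (al A B C t)
            = al A' B' C' (Monoid.Coprod.map f g t) := fun t => DFunLike.congr_fun X3 t
        simp only [hn, map_mul, map_inv, m1, m2, m3, x1, x2, x3, hu', hv', hw']
        simp
      refine ⟨x * n⁻¹, ?_, ?_⟩
      · simp only [SetLike.mem_coe, mem_cosmash₃]
        refine ⟨?_, ?_, ?_⟩ <;>
          simp [hπ₁n, hπ₂n, hπ₃n, ← hu, ← hv, ← hw]
      · rw [map_mul, map_inv, hφn]
        simp [hφ]
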